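/- Let (b₀,b₁,…) be a sequence of integers such that p⁽ⁿ⁾ does not tend to ∞. Then the set of k ∈ ℕ for which the index-tracking sequence e⁽⁰⁾(k), e⁽¹⁾(k), … is infinite (never terminates) is finite. -/

import Mathlib

open Filter Topology OnePoint

/-- The Möbius map `z ↦ b - 1/z` on the one-point compactification `ℝ∞` of `ℝ`. -/
noncomputable def mob (b : ℤ) (z : OnePoint ℝ) : OnePoint ℝ :=
  Option.elim z ((b : ℝ) : OnePoint ℝ)
    (fun x => if x = 0 then (∞ : OnePoint ℝ) else (((b : ℝ) - 1 / x : ℝ) : OnePoint ℝ))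

/-- Value of a finite continued fraction `[b₀, …, b_m]`, i.e. `s₀(s₁(⋯ s_m(∞)))`. -/
noncomputable def cfVal : List ℤ → OnePoint ℝ
  | [] => ∞
  | b :: t => mob b (cfVal t)

/-- The `n`th convergent `v_n = S_n(∞)` of the continued fraction `[b₀, b₁, …]`. -/
noncomputable def cfConv (b : ℕ → ℤ) (n : ℕ) : OnePoint ℝ :=
  cfVal ((List.range (n + 1)).map b)

/-- `m` is a positive index at which the coefficient is `0`, `1` or `-1`. -/
def badIdx (b : ℕ → ℤ) (m : ℕ) : Prop :=
  1 ≤ m ∧ (b m = 0 ∨ b m = 1 ∨ b m = -1)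

instance (b : ℕ → ℤ) : DecidablePred (badIdx b) := fun m => by
  unfold badIdx; infer_instance

-- The singularization map `Φ` on integer sequences.
open Classical in
noncomputable def Phi (b : ℕ → ℤ) : ℕ → ℤ :=
  if h : ∃ m, badIdx b m then
    let m := Nat.find h
    if b m = 0 then
      fun k => if k + 1 < m then b k
        else if k = m - 1 then b (m - 1) + b (m + 1)
        else b (k + 2)
    else if b m = 1 then
      fun k => if k + 1 < m then b k
        else if k = m - 1 then b (m - 1) - 1
        else if k = m then b (m + 1) - 1
        else b (k + 1)
    else
      fun k => if k + 1 < m then b k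
        else if k = m - 1 then b (m - 1) + 1
        else if k = m then b (m + 1) + 1
        else b (k + 1)
  else b

-- `p(b) ∈ ℕ ∪ {∞}`: the least positive index at which `0`, `1` or `-1` occurs.
open Classical in
noncomputable def pIdx (b : ℕ → ℤ) : ℕ∞ :=
  if h : ∃ m, badIdx b m then (Nat.find h : ℕ∞) else ⊤

/-- `p⁽ⁿ⁾ → ∞` as `n → ∞`. -/
def PTendsToTop (b : ℕ → ℤ) : Prop :=
  ∀ N : ℕ, ∃ M : ℕ, ∀ n ≥ M, (N : ℕ∞) < pIdx (Phi^[n] b)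

/-- `p = liminf pⁿ`, as a natural number (junk value if the liminf is `∞`). -/
noncomputable def pLim (b : ℕ → ℤ) : ℕ :=
  (Filter.liminf (fun n => pIdx (Phi^[n] b)) Filter.atTop).toNat

/-- `q⁽ⁿ⁾ = |b⁽ⁿ⁾_{p-1}|`. -/
noncomputable def qSeq (b : ℕ → ℤ) (n : ℕ) : ℕ :=
  ((Phi^[n] b) (pLim b - 1)).natAbs

/-- Two continued fractions have the same tail. -/
def SameTail (b c : ℕ → ℤ) : Prop := ∃ r s : ℕ, ∀ k : ℕ, b (r + k) = c (s + k)

/-- `bstar` is the limit continued fraction: each coefficient of `Φⁿ(b)` stabilises on it. -/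
def EventuallyCoeff (b bstar : ℕ → ℤ) : Prop :=
  ∀ k : ℕ, ∃ N : ℕ, ∀ n ≥ N, Phi^[n] b k = bstar k

/-- The point of `ℝ∞` represented by the integer fraction `a/b` (`∞` when `b = 0`). -/
noncomputable def intPt (a b : ℤ) : OnePoint ℝ :=
  if b = 0 then ∞ else (((a : ℝ) / (b : ℝ)) : OnePoint ℝ)

/-- Adjacency in the Farey graph: `x = a/b`, `y = c/d` with `ad - bc = ±1`. -/
def FareyAdj (x y : OnePoint ℝ) : Prop :=
  ∃ a b c d : ℤ, x = intPt a b ∧ y = intPt c d ∧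
    (a * d - b * c = 1 ∨ a * d - b * c = -1)

/-- `x` is an extended rational, i.e. a member of `ℚ∞ = ℚ ∪ {∞} ⊆ ℝ∞`. -/
def IsExtRat (x : OnePoint ℝ) : Prop :=
  x = ∞ ∨ ∃ q : ℚ, x = ((q : ℝ) : OnePoint ℝ)

-- One step of the index-tracking sequence, for the current coefficient sequence `c`.
open Classical in
noncomputable def eStep (c : ℕ → ℤ) (e : ℕ) : Option ℕ :=
  if h : ∃ m, badIdx c m then
    let m := Nat.find h
    if c m = 0 then
      if e + 2 ≤ m then Option.some e
      else if e = m - 1 ∨ e = m then (none : Option ℕ)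
      else Option.some (e - 2)
    else
      if e + 2 ≤ m then Option.some e
      else if e = m - 1 then (none : Option ℕ)
      else Option.some (e - 1)
  else Option.some e

/-- The index-tracking sequence `e⁽⁰⁾(k), e⁽¹⁾(k), …` (`none` once it has terminated). -/
noncomputable def eSeq (b : ℕ → ℤ) (k : ℕ) : ℕ → Option ℕ
  | 0 => Option.some k
  | n + 1 => (eSeq b k n).bind (eStep (Phi^[n] b))

section eStepLemmas

variable {c : ℕ → ℤ} {e : ℕ}

lemma eStep_no (h : ¬ ∃ m, badIdx c m) : eStep c e = Option.some e := by
  unfold eStep; rw [dif_neg h]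

lemma eStep_lo (hb : ∃ m, badIdx c m) (h : e + 2 ≤ Nat.find hb) :
    eStep c e = Option.some e := by
  unfold eStep; rw [dif_pos hb]; dsimp only
  by_cases h0 : c (Nat.find hb) = 0
  · rw [if_pos h0, if_pos h]
  · rw [if_neg h0, if_pos h]

lemma eStep_mid0 (hb : ∃ m, badIdx c m) (h0 : c (Nat.find hb) = 0)
    (h : e = Nat.find hb - 1 ∨ e = Nat.find hb) : eStep c e = none := by
  have hm1 : 1 ≤ Nat.find hb := (Nat.find_spec hb).1
  unfold eStep; rw [dif_pos hb]; dsimp only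
  rw [if_pos h0, if_neg (by omega), if_pos h]

lemma eStep_hi0 (hb : ∃ m, badIdx c m) (h0 : c (Nat.find hb) = 0)
    (h : Nat.find hb + 1 ≤ e) : eStep c e = Option.some (e - 2) := by
  have hm1 : 1 ≤ Nat.find hb := (Nat.find_spec hb).1
  unfold eStep; rw [dif_pos hb]; dsimp only
  rw [if_pos h0, if_neg (by omega), if_neg (by omega)]

lemma eStep_mid1 (hb : ∃ m, badIdx c m) (h0 : ¬ c (Nat.find hb) = 0)
    (h : e = Nat.find hb - 1) : eStep c e = none := by
  have hm1 : 1 ≤ Nat.find hb := (Nat.find_spec hb).1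
  unfold eStep; rw [dif_pos hb]; dsimp only
  rw [if_neg h0, if_neg (by omega), if_pos h]

lemma eStep_hi1 (hb : ∃ m, badIdx c m) (h0 : ¬ c (Nat.find hb) = 0)
    (h : Nat.find hb ≤ e) : eStep c e = Option.some (e - 1) := by
  have hm1 : 1 ≤ Nat.find hb := (Nat.find_spec hb).1
  unfold eStep; rw [dif_pos hb]; dsimp only
  rw [if_neg h0, if_neg (by omega), if_neg (by omega)]

/-- Full case analysis of a surviving `eStep`. -/
lemma eStep_some_cases {v : ℕ} (h : eStep c e = Option.some v) :
    ((¬ ∃ m, badIdx c m) ∧ v = e) ∨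
    (∃ hb : ∃ m, badIdx c m,
      (e + 2 ≤ Nat.find hb ∧ v = e) ∨
      (c (Nat.find hb) = 0 ∧ Nat.find hb + 1 ≤ e ∧ v = e - 2) ∨
      (¬ c (Nat.find hb) = 0 ∧ Nat.find hb ≤ e ∧ v = e - 1)) := by
  by_cases hb : ∃ m, badIdx c m
  · right
    refine ⟨hb, ?_⟩
    have hm1 : 1 ≤ Nat.find hb := (Nat.find_spec hb).1
    by_cases hlo : e + 2 ≤ Nat.find hb
    · rw [eStep_lo hb hlo] at h
      exact Or.inl ⟨hlo, (Option.some.injEq _ _ ▸ h).symm⟩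
    · by_cases h0 : c (Nat.find hb) = 0
      · by_cases hmid : e = Nat.find hb - 1 ∨ e = Nat.find hb
        · rw [eStep_mid0 hb h0 hmid] at h; exact absurd h (by simp)
        · have hhi : Nat.find hb + 1 ≤ e := by omega
          rw [eStep_hi0 hb h0 hhi] at h
          exact Or.inr (Or.inl ⟨h0, hhi, (Option.some.injEq _ _ ▸ h).symm⟩)
      · by_cases hmid : e = Nat.find hb - 1
        · rw [eStep_mid1 hb h0 hmid] at h; exact absurd h (by simp)
        · have hhi : Nat.find hb ≤ e := by omega
          rw [eStep_hi1 hb h0 hhi] at h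
          exact Or.inr (Or.inr ⟨h0, hhi, (Option.some.injEq _ _ ▸ h).symm⟩)
  · left
    rw [eStep_no hb] at h
    exact ⟨hb, (Option.some.injEq _ _ ▸ h).symm⟩

lemma eStep_le {v : ℕ} (h : eStep c e = Option.some v) : v ≤ e := by
  rcases eStep_some_cases h with ⟨-, rfl⟩ | ⟨hb, hc⟩
  · exact le_rfl
  · have hm1 : 1 ≤ Nat.find hb := (Nat.find_spec hb).1
    rcases hc with ⟨h1, rfl⟩ | ⟨-, h1, rfl⟩ | ⟨-, h1, rfl⟩ <;> omega

lemma eStep_inj {e' v : ℕ}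
    (h : eStep c e = Option.some v) (h' : eStep c e' = Option.some v) : e = e' := by
  rcases eStep_some_cases h with ⟨hnb, rfl⟩ | ⟨hb, hc⟩
  · rcases eStep_some_cases h' with ⟨-, h2⟩ | ⟨hb', -⟩
    · omega
    · exact absurd hb' hnb
  · rcases eStep_some_cases h' with ⟨hnb, -⟩ | ⟨hb', hc'⟩
    · exact absurd hb hnb
    · have hm1 : 1 ≤ Nat.find hb := (Nat.find_spec hb).1
      have : Nat.find hb' = Nat.find hb := by rfl
      rw [this] at hc'
      rcases hc with ⟨h1, h2⟩ | ⟨h0, h1, h2⟩ | ⟨h0, h1, h2⟩ <;>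
        rcases hc' with ⟨g1, g2⟩ | ⟨g0, g1, g2⟩ | ⟨g0, g1, g2⟩ <;>
        omega

lemma eStep_decr {v N : ℕ} (hb : ∃ m, badIdx c m)
    (hm : Nat.find hb ≤ N) (he : ¬ e + 2 ≤ N)
    (h : eStep c e = Option.some v) : v < e := by
  rcases eStep_some_cases h with ⟨hnb, -⟩ | ⟨hb', hc⟩
  · exact absurd hb hnb
  · have hm1 : 1 ≤ Nat.find hb := (Nat.find_spec hb).1
    have heq : Nat.find hb' = Nat.find hb := by rfl
    rw [heq] at hc
    rcases hc with ⟨h1, h2⟩ | ⟨h0, h1, h2⟩ | ⟨h0, h1, h2⟩ <;> omega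

end eStepLemmas

lemma eSeq_inj (b : ℕ → ℤ) {k k' : ℕ} :
    ∀ n v, eSeq b k n = Option.some v → eSeq b k' n = Option.some v → k = k' := by
  intro n
  induction n with
  | zero =>
    intro v h h'
    simp only [eSeq, Option.some.injEq] at h h'
    omega
  | succ n ih =>
    intro v h h'
    rw [eSeq, Option.bind_eq_some_iff] at h h'
    obtain ⟨w, hw, hs⟩ := h
    obtain ⟨w', hw', hs'⟩ := h'
    have : w = w' := eStep_inj hs hs'
    subst this
    exact ih w hw hw'

lemma pIdx_le_iff {b : ℕ → ℤ} {N : ℕ} (h : pIdx b ≤ (N : ℕ∞)) :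
    ∃ hb : ∃ m, badIdx b m, Nat.find hb ≤ N := by
  unfold pIdx at h
  split at h
  case isTrue hb =>
    exact ⟨hb, by exact_mod_cast h⟩
  case isFalse =>
    exact absurd h (by simp)

lemma survivor_small (b : ℕ → ℤ) (N : ℕ) (hN1 : 1 ≤ N)
    (hN : ∀ M : ℕ, ∃ n, M ≤ n ∧ pIdx (Phi^[n] b) ≤ (N : ℕ∞)) (k : ℕ)
    (hs : ∀ n, eSeq b k n ≠ none) :
    ∃ n₀, ∀ n, n₀ ≤ n → (eSeq b k n).getD 0 + 2 ≤ N := by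
  set E : ℕ → ℕ := fun n => (eSeq b k n).getD 0 with hEdef
  have hE : ∀ n, eSeq b k n = Option.some (E n) := by
    intro n
    cases h : eSeq b k n with
    | none => exact absurd h (hs n)
    | some v => simp [hEdef, h]
  have hstep : ∀ n, eStep (Phi^[n] b) (E n) = Option.some (E (n + 1)) := by
    intro n
    have h1 := hE (n + 1)
    rw [eSeq, hE n, Option.bind_some] at h1
    exact h1
  have hanti : ∀ n m, n ≤ m → E m ≤ E n := by
    intro n m hnm
    induction m with
    | zero =>
      have h0 : n = 0 := Nat.le_zero.mp hnm
      subst h0; exact le_refl _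
    | succ m ih =>
      rcases Nat.lt_or_ge n (m + 1) with h | h
      · exact le_trans (eStep_le (hstep m)) (ih (by omega))
      · have h0 : n = m + 1 := by omega
        subst h0; exact le_refl _
  have hne : (Set.range E).Nonempty := ⟨E 0, 0, rfl⟩
  obtain ⟨n₀, hn₀⟩ := Nat.sInf_mem hne
  have hconst : ∀ n, n₀ ≤ n → E n = E n₀ := by
    intro n hn
    refine le_antisymm (hanti n₀ n hn) ?_
    rw [hn₀]
    exact Nat.sInf_le ⟨n, rfl⟩
  refine ⟨n₀, fun n hn => ?_⟩
  show E n + 2 ≤ N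
  rw [hconst n hn]
  by_contra hcon
  obtain ⟨n', hn', hple⟩ := hN n₀
  obtain ⟨hb, hfind⟩ := pIdx_le_iff hple
  have h1 : E n' = E n₀ := hconst n' hn'
  have h2 : E (n' + 1) = E n₀ := hconst (n' + 1) (by omega)
  have := eStep_decr hb hfind (by omega : ¬ E n' + 2 ≤ N) (hstep n')
  omega

/-- **Lemma 9.** If `p⁽ⁿ⁾ ↛ ∞`, then only finitely many of the index-tracking sequences
`e⁽⁰⁾(k), e⁽¹⁾(k), …` are infinite. -/
theorem stmt18 (b : ℕ → ℤ) (hp : ¬ PTendsToTop b) :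
    {k : ℕ | ∀ n : ℕ, eSeq b k n ≠ none}.Finite := by
  unfold PTendsToTop at hp
  push_neg at hp
  obtain ⟨N, hN⟩ := hp
  have hN' : ∀ M : ℕ, ∃ n, M ≤ n ∧ pIdx (Phi^[n] b) ≤ (N : ℕ∞) := by
    intro M
    obtain ⟨n, hn, hle⟩ := hN M
    exact ⟨n, hn, hle⟩
  have hN1 : 1 ≤ N := by
    obtain ⟨n, -, hple⟩ := hN' 0
    obtain ⟨hb, hfind⟩ := pIdx_le_iff hple
    have := (Nat.find_spec hb).1
    omega
  by_contra hfin
  obtain ⟨T, hTsub, hTcard⟩ := Set.Infinite.exists_subset_card_eq hfin N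
  have hchoice : ∀ k : ℕ, k ∈ T →
      ∃ n₀, ∀ n, n₀ ≤ n → (eSeq b k n).getD 0 + 2 ≤ N := by
    intro k hk
    exact survivor_small b N hN1 hN' k (hTsub hk)
  choose! f hf using hchoice
  set M := T.sup f with hM
  have hinj : Set.InjOn (fun k => (eSeq b k M).getD 0) T := by
    intro k hk k' hk' hEq
    have hsk : eSeq b k M ≠ none := hTsub hk M
    have hsk' : eSeq b k' M ≠ none := hTsub hk' M
    cases h1 : eSeq b k M with
    | none => exact absurd h1 hsk
    | some v =>
      cases h2 : eSeq b k' M with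
      | none => exact absurd h2 hsk'
      | some v' =>
        simp only [h1, h2, Option.getD_some] at hEq
        subst hEq
        exact eSeq_inj b M v h1 h2
  have hmem : ∀ k ∈ T, (eSeq b k M).getD 0 ∈ Finset.range (N - 1) := by
    intro k hk
    rw [Finset.mem_range]
    have := hf k hk M (Finset.le_sup hk)
    omega
  have hcard : T.card ≤ (Finset.range (N - 1)).card := by
    calc T.card = (T.image (fun k => (eSeq b k M).getD 0)).card :=
          (Finset.card_image_of_injOn hinj).symm
      _ ≤ (Finset.range (N - 1)).card := by
          apply Finset.card_le_card
          intro x hx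
          obtain ⟨k, hk, rfl⟩ := Finset.mem_image.mp hx
          exact hmem k hk
  rw [hTcard, Finset.card_range] at hcard
  omega
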